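/- arXiv:2202.12366 — 2 statements merged into one kernel-verified Lean document; each statement's English description precedes it below -/
import Mathlib

section
/- Grade the ring A = Z/2[τ, e1, e2]/(e1² - e2τ) by setting deg(τ) = (0,1), deg(e1) = (1,1), deg(e2) = (2,1) in Z × Z. Then for every pair (a,b) with 0 ≤ a ≤ 2b, the homogeneous component A^{(a,b)} is a one-dimensional Z/2-vector space, and A^{(a,b)} = 0 whenever a > 2b or b < 0. -/
noncomputable section

/-- The field `ℤ/2`. -/
abbrev k2 : Type := ZMod 2

open MvPolynomial in
/-- The ideal `(e₁² - e₂τ)` of `ℤ/2[τ,e₁,e₂]`, with variables `0 = τ`, `1 = e₁`, `2 = e₂`. -/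
abbrev I8 : Ideal (MvPolynomial (Fin 3) k2) :=
  Ideal.span {X 1 ^ 2 - X 2 * X 0}

/-- The ring `A = ℤ/2[τ,e₁,e₂]/(e₁² - e₂τ)`. -/
abbrev A8 : Type := MvPolynomial (Fin 3) k2 ⧸ I8

/-- The class of `τ` in `A`. -/
def τ8 : A8 := Ideal.Quotient.mk I8 (MvPolynomial.X 0)

/-- The class of `e₁` in `A`. -/
def e18 : A8 := Ideal.Quotient.mk I8 (MvPolynomial.X 1)

/-- The class of `e₂` in `A`. -/
def e28 : A8 := Ideal.Quotient.mk I8 (MvPolynomial.X 2)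


section Aux
open MvPolynomial

private def f8 (i j l : ℕ) : A8 := τ8 ^ i * e18 ^ j * e28 ^ l

private lemma mk_eq_f8 (i j l : ℕ) :
    Ideal.Quotient.mk I8 (X 0 ^ i * X 1 ^ j * X 2 ^ l : MvPolynomial (Fin 3) k2) = f8 i j l := by
  simp [f8, τ8, e18, e28, map_mul, map_pow]

private lemma rel8 : e18 ^ 2 = e28 * τ8 := by
  have h : (Ideal.Quotient.mk I8) ((X 1 : MvPolynomial (Fin 3) k2) ^ 2) =
      (Ideal.Quotient.mk I8) (X 2 * X 0) := by
    rw [Ideal.Quotient.eq]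
    exact Ideal.subset_span rfl
  simpa [e18, e28, τ8, map_mul, map_pow] using h

private lemma f8_step (i j l : ℕ) : f8 i (j + 2) l = f8 (i + 1) j (l + 1) := by
  have h : e18 ^ (j + 2) = e18 ^ j * (e28 * τ8) := by rw [pow_add, rel8]
  simp only [f8, h, pow_succ]
  ring

private lemma f8_reduce : ∀ j i l : ℕ, f8 i j l = f8 (i + j / 2) (j % 2) (l + j / 2) := by
  intro j
  induction j using Nat.strong_induction_on with
  | _ j ih =>
    match j with
    | 0 => intro i l; simp
    | 1 => intro i l; simp
    | (j + 2) =>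
      intro i l
      rw [f8_step, ih j (by omega) (i + 1) (l + 1)]
      have h1 : i + 1 + j / 2 = i + (j + 2) / 2 := by omega
      have h2 : j % 2 = (j + 2) % 2 := by omega
      have h3 : l + 1 + j / 2 = l + (j + 2) / 2 := by omega
      rw [h1, h2, h3]

private def ε8 : A8 →+* k2 :=
  Ideal.Quotient.lift I8 (MvPolynomial.eval fun _ => (1 : k2)) (by
    intro p hp
    have h : I8 ≤ RingHom.ker (MvPolynomial.eval fun _ => (1 : k2)) := by
      rw [Ideal.span_le]
      intro q hq
      rw [Set.mem_singleton_iff] at hq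
      subst hq
      simp [RingHom.mem_ker]
    exact h hp)

private lemma f8_ne_zero (i j l : ℕ) : f8 i j l ≠ 0 := by
  intro h
  have h1 : ε8 (f8 i j l) = 1 := by
    simp [f8, τ8, e18, e28, map_mul, map_pow, show ∀ n : Fin 3, ε8 (Ideal.Quotient.mk I8 (X n)) = 1 from
      fun n => (Ideal.Quotient.lift_mk _ _ _).trans (MvPolynomial.eval_X _)]
  rw [h, map_zero] at h1
  exact one_ne_zero h1.symm

end Aux

open MvPolynomial in
/-- The bigraded component of `A` in bidegree `(a,b)`, spanned by the monomials
`τ^i e₁^j e₂^l` with `deg(τ) = (0,1)`, `deg(e₁) = (1,1)`, `deg(e₂) = (2,1)`. -/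
def comp9 (a b : ℤ) : Submodule k2 A8 :=
  Submodule.span k2 {x : A8 | ∃ i j l : ℕ,
    (j : ℤ) + 2 * l = a ∧ (i : ℤ) + j + l = b ∧
    x = Ideal.Quotient.mk I8 (X 0 ^ i * X 1 ^ j * X 2 ^ l)}

/-- the component `A^{(a,b)}` is one-dimensional over `ℤ/2` whenever
`0 ≤ a ≤ 2b`, and vanishes whenever `a > 2b` or `b < 0`. -/
theorem stmt9 (a b : ℤ) :
    (0 ≤ a → a ≤ 2 * b → Module.finrank k2 (comp9 a b) = 1) ∧
    (2 * b < a ∨ b < 0 → comp9 a b = ⊥) := by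
  constructor
  · intro ha hab
    set j0 : ℕ := a.toNat % 2 with hj0
    set l0 : ℕ := a.toNat / 2 with hl0
    set i0 : ℕ := b.toNat - j0 - l0 with hi0
    have hset : {x : A8 | ∃ i j l : ℕ,
        (j : ℤ) + 2 * l = a ∧ (i : ℤ) + j + l = b ∧
        x = Ideal.Quotient.mk I8
          (MvPolynomial.X 0 ^ i * MvPolynomial.X 1 ^ j * MvPolynomial.X 2 ^ l)} =
        {f8 i0 j0 l0} := by
      ext x
      simp only [Set.mem_setOf_eq, Set.mem_singleton_iff]
      constructor
      · rintro ⟨i, j, l, h1, h2, rfl⟩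
        rw [mk_eq_f8, f8_reduce]
        have e1 : i + j / 2 = i0 := by omega
        have e2 : j % 2 = j0 := by omega
        have e3 : l + j / 2 = l0 := by omega
        rw [e1, e2, e3]
      · rintro rfl
        exact ⟨i0, j0, l0, by omega, by omega, (mk_eq_f8 i0 j0 l0).symm⟩
    rw [comp9, hset]
    exact finrank_span_singleton (f8_ne_zero i0 j0 l0)
  · intro h
    rw [eq_bot_iff, comp9, Submodule.span_le]
    rintro x ⟨i, j, l, h1, h2, rfl⟩
    exfalso; omega
end
end

section
/- Let N = ⊕_{i ≥ 1, j ≥ 1} B_i (a direct sum of copies of the modules B_i indexed by pairs (i,j) with i,j ≥ 1), viewed as a module over S = Z/2[a,u][ξ, τσ, μ]/(ξμ - u²) by: a, u act componentwise via the Z/2[a,u]-structure of B_i; μ maps the (i,j)-component into the (i+1,j)-component via the inclusion B_i ↪ B_{i+1}; ξ maps the (i,j)-component to the (i-1,j)-component via multiplication by u² (i.e. a^m v^n ↦ a^m v^{n-2}, zero if n < 2), and to 0 when i = 1; τσ maps the (i,j)-component to the (i,j-1)-component by the identity for j ≥ 2 and to 0 for j = 1. Then these formulas define a well-defined S-module structure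 on N; in particular ξ·(μ·x) = u²·x for all x ∈ N. -/
noncomputable section

/-- The polynomial ring `ℤ/2[a,u]`, realized as `(ℤ/2[u])[a]`. -/
abbrev Rau : Type := Polynomial (Polynomial k2)

/-- The variable `a`. -/
def aR : Rau := Polynomial.X

/-- The variable `u`. -/
def uR : Rau := Polynomial.C Polynomial.X

/-- Given two commuting `ℤ/2`-linear endomorphisms `A`, `U` of `M`, the ring
homomorphism `ℤ/2[a,u] → End M` sending `a ↦ A`, `u ↦ U`. -/
def mkPhi {M : Type} [AddCommGroup M] [Module k2 M] (A U : Module.End k2 M)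
    (hAU : Commute A U) : Rau →+* Module.End k2 M :=
  Polynomial.eval₂RingHom'
    (Polynomial.eval₂RingHom' (algebraMap k2 (Module.End k2 M)) U fun c => Algebra.commutes c U)
    A (by
      intro p
      induction p using Polynomial.induction_on with
      | C c =>
          simpa [Polynomial.eval₂RingHom'] using Algebra.commute_algebraMap_left c A
      | add p q hp hq =>
          simpa [map_add] using hp.add_left hq
      | monomial n c h =>
          have hx : (Polynomial.eval₂RingHom' (algebraMap k2 (Module.End k2 M)) U
              fun c => Algebra.commutes c U) (Polynomial.C c * Polynomial.X ^ (n + 1)) =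
              (Polynomial.eval₂RingHom' (algebraMap k2 (Module.End k2 M)) U
              fun c => Algebra.commutes c U) (Polynomial.C c * Polynomial.X ^ n) * U := by
            rw [pow_succ, ← mul_assoc, map_mul]
            simp [Polynomial.eval₂RingHom']
          rw [hx]
          exact h.mul_left hAU.symm)

/-- The negative cone `NC`, with `ℤ/2`-basis `θ/(aᵐuⁿ)` indexed by `(m, n) ∈ ℕ × ℕ`. -/
abbrev NC : Type := (ℕ × ℕ) →₀ k2

/-- The basis element `θ/(aᵐuⁿ)` of `NC`. -/
def θ (m n : ℕ) : NC := Finsupp.single (m, n) 1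

/-- The action of `a` on `NC`: lower `m`, killing `m = 0`. -/
def Aop : Module.End k2 NC :=
  Finsupp.lsum k2 fun p => if p.1 = 0 then 0 else Finsupp.lsingle (p.1 - 1, p.2)

/-- The action of `u` on `NC`: lower `n`, killing `n = 0`. -/
def Uop : Module.End k2 NC :=
  Finsupp.lsum k2 fun p => if p.2 = 0 then 0 else Finsupp.lsingle (p.1, p.2 - 1)

lemma comm_AU : Commute Aop Uop := by
  rw [Commute, SemiconjBy]
  refine Finsupp.lhom_ext fun p c => ?_
  obtain ⟨m, n⟩ := p
  rcases m with _ | m <;> rcases n with _ | n <;>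
    simp [Module.End.mul_apply, Aop, Uop, Finsupp.lsum_single]

/-- The `ℤ/2[a,u]`-module structure on the negative cone. -/
instance : Module Rau NC := Module.compHom NC (mkPhi Aop Uop comm_AU)

/-- The module `B_i = ℤ/2[a,a⁻¹,v]/(v^{2i})`, with `ℤ/2`-basis `aᵐvⁿ`
indexed by pairs `(m, n) ∈ ℤ × ℕ` with `n < 2i`. -/
abbrev Bm (i : ℕ) : Type := {p : ℤ × ℕ // p.2 < 2 * i} →₀ k2

/-- The action of `a` on `B_i`: multiplication by `a`, i.e. `aᵐvⁿ ↦ aᵐ⁺¹vⁿ`. -/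
def AopB (i : ℕ) : Module.End k2 (Bm i) :=
  Finsupp.lsum k2 fun p => Finsupp.lsingle ⟨(p.1.1 + 1, p.1.2), p.2⟩

/-- The action of `u` on `B_i`: division by `v`, i.e. `aᵐvⁿ ↦ aᵐvⁿ⁻¹` for `n ≥ 1`
and `aᵐv⁰ ↦ 0`. -/
def UopB (i : ℕ) : Module.End k2 (Bm i) :=
  Finsupp.lsum k2 fun p =>
    if p.1.2 = 0 then 0
    else Finsupp.lsingle ⟨(p.1.1, p.1.2 - 1), lt_of_le_of_lt (Nat.sub_le _ _) p.2⟩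

lemma comm_AUB (i : ℕ) : Commute (AopB i) (UopB i) := by
  rw [Commute, SemiconjBy]
  refine Finsupp.lhom_ext fun p c => ?_
  obtain ⟨⟨m, n⟩, hn⟩ := p
  rcases n with _ | n <;>
    simp [Module.End.mul_apply, AopB, UopB, Finsupp.lsum_single]

/-- The `ℤ/2[a,u]`-module structure on `B_i`. -/
instance (i : ℕ) : Module Rau (Bm i) :=
  Module.compHom (Bm i) (mkPhi (AopB i) (UopB i) (comm_AUB i))

/-- The inclusion `B_i ↪ B_{i+1}`, `aᵐvⁿ ↦ aᵐvⁿ`. -/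
def ιB (i : ℕ) : Bm i →ₗ[k2] Bm (i + 1) :=
  Finsupp.lmapDomain k2 k2 fun p => ⟨p.1, lt_of_lt_of_le p.2 (by omega)⟩

/-- The map `φ = (·u²) : B_{i+1} → B_i`, `aᵐvⁿ ↦ aᵐvⁿ⁻²` for `n ≥ 2` and `0` for `n ∈ {0,1}`. -/
def φB (i : ℕ) : Bm (i + 1) →ₗ[k2] Bm i :=
  Finsupp.lsum k2 fun p =>
    if h : 2 ≤ p.1.2 then
      Finsupp.lsingle ⟨(p.1.1, p.1.2 - 2), by have := p.2; omega⟩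
    else 0

/-- The natural quotient map `B_{i+1} → B_i`, killing `aᵐvⁿ` for `n ≥ 2i`. -/
def qB (i : ℕ) : Bm (i + 1) →ₗ[k2] Bm i :=
  Finsupp.lsum k2 fun p => if h : p.1.2 < 2 * i then Finsupp.lsingle ⟨p.1, h⟩ else 0

open MvPolynomial in
/-- The ideal `(ξμ - u²)` of `ℤ/2[a,u,ξ,τσ,μ]`, with variables
`0 = a`, `1 = u`, `2 = ξ`, `3 = τσ`, `4 = μ`. -/
abbrev I5 : Ideal (MvPolynomial (Fin 5) k2) :=
  Ideal.span {X 2 * X 4 - X 1 ^ 2}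

/-- The ring `S = ℤ/2[a,u][ξ,τσ,μ]/(ξμ - u²)`. -/
abbrev S5 : Type := MvPolynomial (Fin 5) k2 ⧸ I5

/-- The quotient map onto `S`. -/
def mk5 : MvPolynomial (Fin 5) k2 →+* S5 := Ideal.Quotient.mk I5

/-- The direct sum `N = ⊕_{i,j ≥ 1} B_i{μⁱ/τσʲ}`: the component indexed by
`p = (p₁, p₂)` is `B_{p₁}` placed at `(i, j) = (p₁, p₂ + 1)` (the components with
`p₁ = 0` are the zero module, since `B_0 = 0`). -/
abbrev Nbig : Type := DirectSum (ℕ × ℕ) fun p => Bm p.1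

/-- `a` acting componentwise on `N`. -/
def aopN : Module.End k2 Nbig :=
  DirectSum.toModule k2 (ℕ × ℕ) Nbig fun p =>
    (DirectSum.lof k2 (ℕ × ℕ) (fun q => Bm q.1) p).comp (AopB p.1)

/-- `u` acting componentwise on `N`. -/
def uopN : Module.End k2 Nbig :=
  DirectSum.toModule k2 (ℕ × ℕ) Nbig fun p =>
    (DirectSum.lof k2 (ℕ × ℕ) (fun q => Bm q.1) p).comp (UopB p.1)

/-- `μ` acting on `N`: the `(i,j)`-component maps into the `(i+1,j)`-component
via the inclusion `B_i ↪ B_{i+1}`. -/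
def μopN : Module.End k2 Nbig :=
  DirectSum.toModule k2 (ℕ × ℕ) Nbig fun p =>
    (DirectSum.lof k2 (ℕ × ℕ) (fun q => Bm q.1) (p.1 + 1, p.2)).comp (ιB p.1)

/-- The `ξ`-action on the component `B_{p₁}`: zero on `i = p₁ ≤ 1` (where either the
component is zero or `ξ` maps it to zero), and multiplication by `u²`
landing in the `(i-1,j)`-component otherwise. -/
def ξcomp : ∀ p : ℕ × ℕ, Bm p.1 →ₗ[k2] Nbig
  | (0, _) => 0
  | (i + 1, j) => (DirectSum.lof k2 (ℕ × ℕ) (fun q => Bm q.1) (i, j)).comp (φB i)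

/-- `ξ` acting on `N`. -/
def ξopN : Module.End k2 Nbig :=
  DirectSum.toModule k2 (ℕ × ℕ) Nbig ξcomp

/-- The `τσ`-action on the component `B_{p₁}` at `(i,j) = (p₁, p₂+1)`: zero for
`j = 1` (i.e. `p₂ = 0`) and the identity into the `(i, j-1)`-component otherwise. -/
def τcomp : ∀ p : ℕ × ℕ, Bm p.1 →ₗ[k2] Nbig
  | (_, 0) => 0
  | (i, j + 1) => DirectSum.lof k2 (ℕ × ℕ) (fun q => Bm q.1) (i, j)

/-- `τσ` acting on `N`. -/
def τopN : Module.End k2 Nbig :=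
  DirectSum.toModule k2 (ℕ × ℕ) Nbig τcomp

/-! ### Auxiliary lemmas -/

set_option maxHeartbeats 1000000
set_option synthInstance.maxHeartbeats 400000

/-- Shorthand for the canonical inclusion of a component of `Nbig`. -/
abbrev lofN (p : ℕ × ℕ) : Bm p.1 →ₗ[k2] Nbig :=
  DirectSum.lof k2 (ℕ × ℕ) (fun q => Bm q.1) p

lemma aopN_lof (p : ℕ × ℕ) (x : Bm p.1) : aopN (lofN p x) = lofN p (AopB p.1 x) := by
  rw [aopN, DirectSum.toModule_lof]; rfl

lemma uopN_lof (p : ℕ × ℕ) (x : Bm p.1) : uopN (lofN p x) = lofN p (UopB p.1 x) := by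
  rw [uopN, DirectSum.toModule_lof]; rfl

lemma μopN_lof (p : ℕ × ℕ) (x : Bm p.1) :
    μopN (lofN p x) = lofN (p.1 + 1, p.2) (ιB p.1 x) := by
  rw [μopN, DirectSum.toModule_lof]; rfl

lemma ξopN_lof (p : ℕ × ℕ) (x : Bm p.1) : ξopN (lofN p x) = ξcomp p x := by
  rw [ξopN, DirectSum.toModule_lof]

lemma τopN_lof (p : ℕ × ℕ) (x : Bm p.1) : τopN (lofN p x) = τcomp p x := by
  rw [τopN, DirectSum.toModule_lof]

lemma endN_ext {F G : Module.End k2 Nbig}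
    (h : ∀ (p : ℕ × ℕ) (q : {r : ℤ × ℕ // r.2 < 2 * p.1}) (c : k2),
      F (lofN p (Finsupp.single q c)) = G (lofN p (Finsupp.single q c))) : F = G := by
  refine DirectSum.linearMap_ext k2 fun p => Finsupp.lhom_ext fun q c => ?_
  simpa using h p q c

lemma AopB_single (i : ℕ) (m : ℤ) (n : ℕ) (h : n < 2 * i) (c : k2) :
    AopB i (Finsupp.single ⟨(m, n), h⟩ c) = Finsupp.single ⟨(m + 1, n), h⟩ c := by
  simp [AopB, Finsupp.lsum_single]

lemma UopB_single (i : ℕ) (m : ℤ) (n : ℕ) (h : n < 2 * i) (c : k2) :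
    UopB i (Finsupp.single ⟨(m, n), h⟩ c) =
      if hn : n = 0 then 0
      else Finsupp.single ⟨(m, n - 1), lt_of_le_of_lt (Nat.sub_le _ _) h⟩ c := by
  rcases n with _ | n <;> simp [UopB, Finsupp.lsum_single]

lemma ιB_single (i : ℕ) (m : ℤ) (n : ℕ) (h : n < 2 * i) (c : k2) :
    ιB i (Finsupp.single ⟨(m, n), h⟩ c) =
      Finsupp.single ⟨(m, n), lt_of_lt_of_le h (by omega)⟩ c := by
  simp [ιB, Finsupp.mapDomain_single]

lemma φB_single (i : ℕ) (m : ℤ) (n : ℕ) (h : n < 2 * (i + 1)) (c : k2) :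
    φB i (Finsupp.single ⟨(m, n), h⟩ c) =
      if hn : 2 ≤ n then Finsupp.single ⟨(m, n - 2), by omega⟩ c else 0 := by
  rcases Nat.lt_or_ge n 2 with hn | hn <;>
    simp [φB, Finsupp.lsum_single, hn, Nat.not_le.mpr, Nat.not_le_of_lt]

lemma φB_ιB (i : ℕ) (x : Bm i) : φB i (ιB i x) = UopB i (UopB i x) := by
  have h : (φB i).comp (ιB i) = (UopB i).comp (UopB i) :=
    Finsupp.lhom_ext (fun (q : {p : ℤ × ℕ // p.2 < 2 * i}) c => by
        obtain ⟨⟨m, n⟩, h⟩ := q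
        rw [LinearMap.comp_apply, LinearMap.comp_apply, ιB_single, φB_single, UopB_single]
        rcases n with _ | n
        · simp
        · rcases n with _ | n
          · simp [UopB_single]
          · rw [dif_pos (by omega), dif_neg (by omega), UopB_single, dif_neg (by omega)]
            rfl)
  simpa using LinearMap.congr_fun h x

lemma ιB_φB (i : ℕ) (x : Bm (i + 1)) :
    ιB i (φB i x) = UopB (i + 1) (UopB (i + 1) x) := by
  have h : (ιB i).comp (φB i) = (UopB (i + 1)).comp (UopB (i + 1)) :=
    Finsupp.lhom_ext (fun (q : {p : ℤ × ℕ // p.2 < 2 * (i + 1)}) c => by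
        obtain ⟨⟨m, n⟩, h⟩ := q
        rw [LinearMap.comp_apply, LinearMap.comp_apply, φB_single, UopB_single]
        rcases n with _ | n
        · simp
        · rcases n with _ | n
          · simp [UopB_single]
          · rw [dif_pos (by omega), dif_neg (by omega), ιB_single, UopB_single,
              dif_neg (by omega)]
            rfl)
  simpa using LinearMap.congr_fun h x

lemma key_ξμ : ξopN * μopN = uopN * uopN := by
  refine endN_ext fun p q c => ?_
  obtain ⟨i, j⟩ := p
  rw [Module.End.mul_apply, Module.End.mul_apply, μopN_lof, ξopN_lof, uopN_lof, uopN_lof]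
  show ξcomp (i + 1, j) _ = _
  rw [ξcomp]
  simp only [LinearMap.comp_apply]
  rw [φB_ιB]

lemma key_μξ : μopN * ξopN = uopN * uopN := by
  refine endN_ext fun p q c => ?_
  obtain ⟨i, j⟩ := p
  rw [Module.End.mul_apply, Module.End.mul_apply, ξopN_lof, uopN_lof, uopN_lof]
  rcases i with _ | i
  · obtain ⟨⟨m, n⟩, h⟩ := q; omega
  · rw [ξcomp]
    simp only [LinearMap.comp_apply]
    rw [μopN_lof, ιB_φB]

lemma comm_au_N : aopN * uopN = uopN * aopN := by
  refine endN_ext fun p q c => ?_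
  simp only [Module.End.mul_apply, aopN_lof, uopN_lof]
  exact congrArg (lofN p) (LinearMap.congr_fun (comm_AUB p.1) _)

lemma comm_aμ_N : aopN * μopN = μopN * aopN := by
  refine endN_ext fun p q c => ?_
  obtain ⟨⟨m, n⟩, hq⟩ := q
  simp only [Module.End.mul_apply, aopN_lof, μopN_lof, ιB_single, AopB_single]

lemma comm_uμ_N : uopN * μopN = μopN * uopN := by
  refine endN_ext fun p q c => ?_
  obtain ⟨⟨m, n⟩, hq⟩ := q
  rcases n with _ | n <;>
    simp only [Module.End.mul_apply, uopN_lof, μopN_lof, ιB_single, UopB_single] <;>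
    simp [ιB_single, UopB_single]

lemma comm_aξ_N : aopN * ξopN = ξopN * aopN := by
  refine endN_ext fun p q c => ?_
  obtain ⟨i, j⟩ := p
  obtain ⟨⟨m, n⟩, hq⟩ := q
  rcases i with _ | i
  · exact absurd hq (by omega)
  · simp only [Module.End.mul_apply, aopN_lof, ξopN_lof, ξcomp, LinearMap.comp_apply,
      AopB_single, φB_single]
    rcases Nat.lt_or_ge n 2 with hn | hn
    · simp [Nat.not_le.mpr hn]
    · simp [hn, AopB_single, aopN_lof]

lemma comm_uξ_N : uopN * ξopN = ξopN * uopN := by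
  refine endN_ext fun p q c => ?_
  obtain ⟨i, j⟩ := p
  obtain ⟨⟨m, n⟩, hq⟩ := q
  rcases i with _ | i
  · exact absurd hq (by omega)
  · simp only [Module.End.mul_apply, uopN_lof, ξopN_lof, ξcomp, LinearMap.comp_apply,
      UopB_single, φB_single]
    rcases n with _ | n
    · simp
    · rcases n with _ | n
      · simp [φB_single]
      · rcases n with _ | n
        · simp [uopN_lof, UopB_single, φB_single]
        · rw [dif_pos (by omega), dif_neg (by omega), UopB_single,
            dif_neg (by omega), φB_single, dif_pos (by omega)]
          rfl

lemma comm_aτ_N : aopN * τopN = τopN * aopN := by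
  refine endN_ext fun p q c => ?_
  obtain ⟨i, j⟩ := p
  rcases j with _ | j <;>
    simp [Module.End.mul_apply, aopN_lof, τopN_lof, τcomp]

lemma comm_uτ_N : uopN * τopN = τopN * uopN := by
  refine endN_ext fun p q c => ?_
  obtain ⟨i, j⟩ := p
  rcases j with _ | j <;>
    simp [Module.End.mul_apply, uopN_lof, τopN_lof, τcomp]

lemma comm_τμ_N : τopN * μopN = μopN * τopN := by
  refine endN_ext fun p q c => ?_
  obtain ⟨i, j⟩ := p
  rcases j with _ | j <;>
    simp [Module.End.mul_apply, μopN_lof, τopN_lof, τcomp]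

lemma comm_ξτ_N : ξopN * τopN = τopN * ξopN := by
  refine endN_ext fun p q c => ?_
  obtain ⟨i, j⟩ := p
  obtain ⟨⟨m, n⟩, hq⟩ := q
  rcases i with _ | i
  · exact absurd hq (by omega)
  · rcases j with _ | j <;>
      simp [Module.End.mul_apply, ξopN_lof, τopN_lof, τcomp, ξcomp]

lemma comm_ξμ_N : ξopN * μopN = μopN * ξopN := key_ξμ.trans key_μξ.symm

def sOps : Set (Module.End k2 Nbig) := {aopN, uopN, ξopN, τopN, μopN}

lemma sOps_comm : ∀ x ∈ sOps, ∀ y ∈ sOps, x * y = y * x := by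
  intro x hx y hy
  simp only [sOps, Set.mem_insert_iff, Set.mem_singleton_iff] at hx hy
  rcases hx with rfl | rfl | rfl | rfl | rfl <;>
    rcases hy with rfl | rfl | rfl | rfl | rfl
  exacts [rfl, comm_au_N, comm_aξ_N, comm_aτ_N, comm_aμ_N,
    comm_au_N.symm, rfl, comm_uξ_N, comm_uτ_N, comm_uμ_N,
    comm_aξ_N.symm, comm_uξ_N.symm, rfl, comm_ξτ_N, comm_ξμ_N,
    comm_aτ_N.symm, comm_uτ_N.symm, comm_ξτ_N.symm, rfl, comm_τμ_N,
    comm_aμ_N.symm, comm_uμ_N.symm, comm_ξμ_N.symm, comm_τμ_N.symm, rfl]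

lemma sOps_key (x y : ↥(Algebra.adjoin k2 sOps)) :
    Commute (x : Module.End k2 Nbig) (y : Module.End k2 Nbig) :=
  Algebra.commute_of_mem_adjoin_of_forall_mem_commute y.2 fun z hz =>
    (Algebra.commute_of_mem_adjoin_of_forall_mem_commute x.2 fun w hw =>
      sOps_comm z hz w hw).symm

instance : CommSemiring ↥(Algebra.adjoin k2 sOps) :=
  { (Algebra.adjoin k2 sOps).toSemiring with
    mul_comm := fun x y => Subtype.ext <| by
      rw [Subalgebra.coe_mul, Subalgebra.coe_mul]
      exact sOps_key x y }

def vOps : Fin 5 → ↥(Algebra.adjoin k2 sOps) :=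
  ![⟨aopN, Algebra.subset_adjoin (by simp [sOps])⟩,
    ⟨uopN, Algebra.subset_adjoin (by simp [sOps])⟩,
    ⟨ξopN, Algebra.subset_adjoin (by simp [sOps])⟩,
    ⟨τopN, Algebra.subset_adjoin (by simp [sOps])⟩,
    ⟨μopN, Algebra.subset_adjoin (by simp [sOps])⟩]

open MvPolynomial in
/-- The evaluation homomorphism on the polynomial ring. -/
def Θ₀ : MvPolynomial (Fin 5) k2 →+* Module.End k2 Nbig :=
  ((Algebra.adjoin k2 sOps).val.toRingHom).comp (MvPolynomial.aeval vOps).toRingHom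

open MvPolynomial in
lemma Θ₀_X (i : Fin 5) : Θ₀ (X i) = (vOps i : Module.End k2 Nbig) := by
  show ((Algebra.adjoin k2 sOps).val (MvPolynomial.aeval vOps (X i))) = _
  rw [MvPolynomial.aeval_X]
  rfl

lemma char2N (y : Nbig) : y + y = 0 := by
  have h : ((1 : k2) + 1) • y = (1 : k2) • y + (1 : k2) • y := add_smul 1 1 y
  rw [one_smul] at h
  rw [← h, show (1 : k2) + 1 = 0 by decide, zero_smul]

lemma char2End (A : Module.End k2 Nbig) : A + A = 0 :=
  LinearMap.ext fun x => by
    simpa [LinearMap.add_apply] using char2N (A x)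

open MvPolynomial in
lemma Θ₀_vanish : ∀ f ∈ I5, Θ₀ f = 0 := by
  have hgen : Θ₀ (X 2 * X 4 - X 1 ^ 2) = 0 := by
    have hchar : (X 2 * X 4 - X 1 ^ 2 : MvPolynomial (Fin 5) k2) =
        X 2 * X 4 + X 1 ^ 2 := by
      rw [sub_eq_add_neg, CharTwo.neg_eq]
    have h1 : Θ₀ (X 2 * X 4 - X 1 ^ 2) =
        Θ₀ (X 2) * Θ₀ (X 4) + Θ₀ (X 1) * Θ₀ (X 1) := by
      rw [hchar, map_add, map_mul, map_pow, sq]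
    rw [h1, Θ₀_X, Θ₀_X, Θ₀_X]
    show ξopN * μopN + uopN * uopN = 0
    rw [key_ξμ]
    exact char2End _
  intro f hf
  rw [Ideal.mem_span_singleton] at hf
  obtain ⟨g, rfl⟩ := hf
  rw [map_mul, hgen, zero_mul]

/-- The induced homomorphism on the quotient `S5`. -/
def Θbig : S5 →+* Module.End k2 Nbig := Ideal.Quotient.lift I5 Θ₀ Θ₀_vanish

open MvPolynomial in
lemma Θbig_X (i : Fin 5) : Θbig (mk5 (X i)) = (vOps i : Module.End k2 Nbig) := by
  show Ideal.Quotient.lift I5 Θ₀ Θ₀_vanish (Ideal.Quotient.mk I5 (X i)) = _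
  rw [Ideal.Quotient.lift_mk]
  exact Θ₀_X i

open MvPolynomial in
/-- the described formulas for the actions of `a`, `u`, `ξ`, `τσ`, `μ`
define a well-defined `S`-module structure on `N = ⊕_{i,j≥1} B_i{μⁱ/τσʲ}` (i.e. a ring
homomorphism `S → End_{ℤ/2}(N)` with the prescribed values on the generators); in
particular `ξ·(μ·x) = u²·x` for all `x ∈ N`. -/
theorem stmt16 :
    (∃ Θ : S5 →+* Module.End k2 Nbig,
      Θ (mk5 (X 0)) = aopN ∧ Θ (mk5 (X 1)) = uopN ∧ Θ (mk5 (X 2)) = ξopN ∧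
      Θ (mk5 (X 3)) = τopN ∧ Θ (mk5 (X 4)) = μopN) ∧
    ∀ x : Nbig, ξopN (μopN x) = uopN (uopN x) := by
  constructor
  · exact ⟨Θbig, Θbig_X 0, Θbig_X 1, Θbig_X 2, Θbig_X 3, Θbig_X 4⟩
  · intro x
    have := LinearMap.congr_fun key_ξμ x
    simpa [Module.End.mul_apply] using this
end
end
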